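/- Let p : [0,1] → ℝ be continuous and strictly positive, let λ, ν ∈ ℝ with ν ≥ 0, let α, β ∈ ℝ, and let u, v : [0,1] → ℝ be twice continuously differentiable, strictly positive on (0,1), both satisfying BC(α,β), with −u''(x) = λ·p(x)·u(x) and −v''(x) = ν·v(x) for all x ∈ [0,1]. Then ν · min_{x ∈ [0,1]} (1/p(x)) ≤ λ ≤ ν · max_{x ∈ [0,1]} (1/p(x)). -/

import Mathlib

open Real

/-- Separated boundary conditions BC(α,β) on [0,1]. -/
def BC (α β : ℝ) (w : ℝ → ℝ) : Prop :=
  w 0 * Real.cos α + deriv w 0 * Real.sin α = 0 ∧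
  w 1 * Real.cos β + deriv w 1 * Real.sin β = 0

/-- Theorem 3.2: λ₀(1,α,β)·min p⁻¹ ≤ λ₀(p,α,β) ≤ λ₀(1,α,β)·max p⁻¹. -/
theorem stmt_9 (p : ℝ → ℝ) (hp : Continuous p)
    (hppos : ∀ x ∈ Set.Icc (0:ℝ) 1, 0 < p x)
    (l ν : ℝ) (hν : 0 ≤ ν) (α β : ℝ) (u v : ℝ → ℝ)
    (hu : ContDiff ℝ 2 u) (hv : ContDiff ℝ 2 v)
    (hupos : ∀ x ∈ Set.Ioo (0:ℝ) 1, 0 < u x)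
    (hvpos : ∀ x ∈ Set.Ioo (0:ℝ) 1, 0 < v x)
    (hubc : BC α β u) (hvbc : BC α β v)
    (huode : ∀ x ∈ Set.Icc (0:ℝ) 1, -(deriv (deriv u) x) = l * p x * u x)
    (hvode : ∀ x ∈ Set.Icc (0:ℝ) 1, -(deriv (deriv v) x) = ν * v x)
    (m M : ℝ) (hm : IsLeast ((fun x => 1 / p x) '' Set.Icc (0:ℝ) 1) m)
    (hM : IsGreatest ((fun x => 1 / p x) '' Set.Icc (0:ℝ) 1) M) :
    ν * m ≤ l ∧ l ≤ ν * M := by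
  -- Wronskian vanishes at the endpoints
  have hW0 : deriv u 0 * v 0 - u 0 * deriv v 0 = 0 := by
    have e1 := hubc.1
    have e2 := hvbc.1
    have e3 := Real.sin_sq_add_cos_sq α
    linear_combination (Real.sin α * v 0 - Real.cos α * deriv v 0) * e1 +
      (Real.cos α * deriv u 0 - Real.sin α * u 0) * e2 -
      (deriv u 0 * v 0 - u 0 * deriv v 0) * e3
  have hW1 : deriv u 1 * v 1 - u 1 * deriv v 1 = 0 := by
    have e1 := hubc.2
    have e2 := hvbc.2
    have e3 := Real.sin_sq_add_cos_sq β
    linear_combination (Real.sin β * v 1 - Real.cos β * deriv v 1) * e1 +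
      (Real.cos β * deriv u 1 - Real.sin β * u 1) * e2 -
      (deriv u 1 * v 1 - u 1 * deriv v 1) * e3
  have hu' : ContDiff ℝ (1+1 : ℕ∞) u := by exact_mod_cast hu
  have hv' : ContDiff ℝ (1+1 : ℕ∞) v := by exact_mod_cast hv
  have hu1 : Differentiable ℝ u := hu'.differentiable (by norm_num)
  have hv1 : Differentiable ℝ v := hv'.differentiable (by norm_num)
  have hu2 : Differentiable ℝ (deriv u) :=
    (((contDiff_succ_iff_deriv (n := 1)).mp (by exact_mod_cast hu')).2.2).differentiable (by norm_num)
  have hv2 : Differentiable ℝ (deriv v) :=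
    (((contDiff_succ_iff_deriv (n := 1)).mp (by exact_mod_cast hv')).2.2).differentiable (by norm_num)
  have hW : ∀ x ∈ Set.Icc (0:ℝ) 1,
      HasDerivAt (fun y => deriv u y * v y - u y * deriv v y)
        ((ν - l * p x) * (u x * v x)) x := by
    intro x hx
    have h1 : HasDerivAt (deriv u) (deriv (deriv u) x) x := (hu2 x).hasDerivAt
    have h2 : HasDerivAt v (deriv v x) x := (hv1 x).hasDerivAt
    have h3 : HasDerivAt u (deriv u x) x := (hu1 x).hasDerivAt
    have h4 : HasDerivAt (deriv v) (deriv (deriv v) x) x := (hv2 x).hasDerivAt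
    have h5 := (h1.mul h2).sub (h3.mul h4)
    refine h5.congr_deriv (Eq.symm ?_)
    have e1 := huode x hx
    have e2 := hvode x hx
    linear_combination (v x) * e1 - (u x) * e2
  have hcont : Continuous (fun x => (ν - l * p x) * (u x * v x)) := by
    exact ((continuous_const.sub (continuous_const.mul hp)).mul
      ((hu1.continuous).mul (hv1.continuous)))
  have hint : ∫ x in (0:ℝ)..1, (ν - l * p x) * (u x * v x) = 0 := by
    rw [intervalIntegral.integral_eq_sub_of_hasDerivAt
      (fun x hx => hW x (by simpa [Set.uIcc_of_le (zero_le_one (α := ℝ))] using hx))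
      (hcont.intervalIntegrable 0 1)]
    linarith [hW0, hW1]
  constructor
  · by_contra h
    push_neg at h
    have hpos : ∀ x ∈ Set.Ioo (0:ℝ) 1, 0 < (ν - l * p x) * (u x * v x) := by
      intro x hx
      have hxI : x ∈ Set.Icc (0:ℝ) 1 := Set.Ioo_subset_Icc_self hx
      have hpx := hppos x hxI
      have hmle : m ≤ 1 / p x := hm.2 (Set.mem_image_of_mem _ hxI)
      have h1 : m * p x ≤ 1 := (le_div_iff₀ hpx).mp hmle
      have h2 : l * p x < ν := by
        nlinarith [mul_lt_mul_of_pos_right h hpx, mul_le_mul_of_nonneg_left h1 hν]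
      have h3 := mul_pos (hupos x hx) (hvpos x hx)
      nlinarith
    have := intervalIntegral.intervalIntegral_pos_of_pos_on
      (hcont.intervalIntegrable 0 1) hpos zero_lt_one
    linarith
  · by_contra h
    push_neg at h
    have hpos : ∀ x ∈ Set.Ioo (0:ℝ) 1, 0 < -((ν - l * p x) * (u x * v x)) := by
      intro x hx
      have hxI : x ∈ Set.Icc (0:ℝ) 1 := Set.Ioo_subset_Icc_self hx
      have hpx := hppos x hxI
      have hMge : 1 / p x ≤ M := hM.2 (Set.mem_image_of_mem _ hxI)
      have h1 : 1 ≤ M * p x := (div_le_iff₀ hpx).mp hMge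
      have h2 : ν < l * p x := by
        nlinarith [mul_lt_mul_of_pos_right h hpx, mul_le_mul_of_nonneg_left h1 hν]
      have h3 := mul_pos (hupos x hx) (hvpos x hx)
      nlinarith
    have := intervalIntegral.intervalIntegral_pos_of_pos_on
      ((hcont.neg).intervalIntegrable 0 1) hpos zero_lt_one
    simp only [Pi.neg_apply] at this
    rw [intervalIntegral.integral_neg, hint] at this
    linarith
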